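/- The determinant of the matrix A equals 1 (equivalently, A belongs to SL(2n+1, ℤ)). -/

import Mathlib

open Matrix in
/-- The arrowhead matrix `A` built from the sequence `d` has determinant 1,
i.e. `A ∈ SL(2n+1, ℤ)`. -/
theorem stmt0 (n : ℕ) (hn : 1 ≤ n) (d : ℕ → ℤ)
    (hd1 : d 1 = 1)
    (hdk : ∀ k : ℕ, 2 ≤ k → d k = 1 + ∏ j ∈ Finset.Icc 1 (k - 1), d j)
    (A : Matrix (Fin (2 * n + 1)) (Fin (2 * n + 1)) ℤ)
    (hA : ∀ i j : Fin (2 * n + 1), A i j =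
      if i = j then d (i.val + 1)
      else if i.val = 0 ∨ j.val = 0 then 1 else 0) :
    A.det = 1 := by
  set P : ℕ → ℤ := fun i => ∏ j ∈ Finset.Icc 1 i, d j with hPdef
  have hP0 : P 0 = 1 := by simp [hPdef]
  have hPsucc : ∀ i : ℕ, P (i + 1) = P i * d (i + 1) := by
    intro i
    simp only [hPdef]
    rw [Finset.prod_Icc_succ_top (by omega)]
  have hdP : ∀ i : ℕ, 1 ≤ i → d (i + 1) = 1 + P i := by
    intro i hi
    rw [hdk (i + 1) (by omega)]
    simp [hPdef]
  have hkey : ∀ i : ℕ, 1 ≤ i → 1 + ∑ k ∈ Finset.Ico 1 i, P k * P k = P i := by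
    intro i hi
    induction i, hi using Nat.le_induction with
    | base => simp [hPsucc 0, hP0, hd1]
    | succ i hi ih =>
        rw [Finset.sum_Ico_succ_top hi, ← add_assoc, ih, hPsucc i, hdP i hi]
        ring
  set u : ℕ → ℕ → ℤ := fun k i =>
    if k = i then 1 else if k = 0 then 1 else if k < i then -P k else 0 with hu
  have hu0 : ∀ j : ℕ, u 0 j = 1 := by
    intro j
    simp only [hu]
    split_ifs <;> simp_all
  have huvanish : ∀ k i : ℕ, i < k → u k i = 0 := by
    intro k i h
    simp only [hu]
    rw [if_neg (by omega), if_neg (by omega), if_neg (by omega)]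
  have humid : ∀ k i : ℕ, 1 ≤ k → k < i → u k i = -P k := by
    intro k i hk hki
    simp only [hu]
    rw [if_neg (by omega), if_neg (by omega), if_pos hki]
  have hudiag : ∀ k : ℕ, u k k = 1 := by
    intro k
    simp only [hu, if_pos rfl]
  have hsum : ∀ i j : ℕ, i < 2 * n + 1 → i ≤ j →
      (∑ k ∈ Finset.range (2 * n + 1), u k i * u k j)
        = (if i = j then d (i + 1) else if i = 0 ∨ j = 0 then 1 else 0) := by
    intro i j hiN hij
    have htrunc : (∑ k ∈ Finset.range (2 * n + 1), u k i * u k j)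
        = ∑ k ∈ Finset.range (i + 1), u k i * u k j := by
      refine (Finset.sum_subset (Finset.range_subset_range.2 (by omega)) ?_).symm
      intro k _ hk
      rw [huvanish k i (by simpa using hk), zero_mul]
    rw [htrunc]
    rcases Nat.eq_zero_or_pos i with hi0 | hipos
    · subst hi0
      rw [Finset.sum_range_one, hu0, hu0]
      split_ifs with h1 h2
      · subst h1; norm_num [hd1]
      · ring
      · omega
    · rw [Finset.sum_range_succ, Finset.range_eq_Ico,
        ← Finset.sum_Ico_consecutive _ (Nat.zero_le 1) hipos]
      have h01 : (∑ k ∈ Finset.Ico 0 1, u k i * u k j) = 1 := by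
        rw [show Finset.Ico 0 1 = {0} by rfl, Finset.sum_singleton, hu0, hu0]; ring
      have hmid : (∑ k ∈ Finset.Ico 1 i, u k i * u k j)
          = ∑ k ∈ Finset.Ico 1 i, P k * P k := by
        refine Finset.sum_congr rfl ?_
        intro k hk
        rw [Finset.mem_Ico] at hk
        rw [humid k i hk.1 hk.2, humid k j hk.1 (by omega)]
        ring
      have hP1 : (∑ k ∈ Finset.Ico 1 i, P k * P k) = P i - 1 := by
        have := hkey i hipos
        linarith
      rw [h01, hmid, hP1, hudiag]
      rcases eq_or_lt_of_le hij with h | h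
      · subst h
        rw [hudiag, if_pos rfl, hdP i hipos]
        ring
      · rw [humid i j hipos h, if_neg (by omega), if_neg (by omega)]
        ring
  set U : Matrix (Fin (2 * n + 1)) (Fin (2 * n + 1)) ℤ :=
    Matrix.of (fun i j => u i.val j.val) with hU
  have hAU : A = Uᵀ * U := by
    ext i j
    rw [hA, Matrix.mul_apply]
    simp only [Matrix.transpose_apply, hU, Matrix.of_apply]
    rcases le_total i.val j.val with h | h
    · rw [Fin.sum_univ_eq_sum_range (fun k => u k i.val * u k j.val) (2 * n + 1),
        hsum i.val j.val i.isLt h]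
      rcases eq_or_ne i j with he | he
      · subst he; simp
      · rw [if_neg (fun hh => he (Fin.ext hh)), if_neg he]
    · have hc : ∀ x : Fin (2 * n + 1), u x.val i.val * u x.val j.val
          = u x.val j.val * u x.val i.val := fun x => mul_comm _ _
      simp_rw [hc]
      rw [Fin.sum_univ_eq_sum_range (fun k => u k j.val * u k i.val) (2 * n + 1),
        hsum j.val i.val j.isLt h]
      rcases eq_or_ne i j with he | he
      · subst he; simp
      · have h1 : j.val ≠ i.val := fun hh => he (Fin.ext hh.symm)
        rw [if_neg h1, if_neg he]
        simp [or_comm]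
  have hUdet : U.det = 1 := by
    have ht : U.BlockTriangular id := by
      intro i j hij
      simp only [id] at hij
      show u i.val j.val = 0
      exact huvanish _ _ hij
    rw [Matrix.det_of_upperTriangular ht]
    have hd : ∀ i : Fin (2 * n + 1), U i i = 1 := fun i => hudiag i.val
    simp [hd]
  rw [hAU, Matrix.det_mul, Matrix.det_transpose, hUdet, one_mul]
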